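/- arXiv:0802.2128 — 9 statements merged into one kernel-verified Lean document; each statement's English description precedes it below -/
import Mathlib

section
/- Let X be a double suit over base set A and dimension N. Then X is perfect if and only if X +_∅ ¬X = 1. -/
/-- A team: a set of valuations `Fin N → A`. -/
abbrev Team (A : Type*) (N : ℕ) := Set (Fin N → A)

/-- A pair of collections of teams. -/
abbrev TPair (A : Type*) (N : ℕ) := Set (Team A N) × Set (Team A N)

/-- A suit: a nonempty collection of teams closed under subsets. -/
def IsSuit {A : Type*} {N : ℕ} (S : Set (Team A N)) : Prop :=
  S.Nonempty ∧ ∀ ⦃V V' : Team A N⦄, V ∈ S → V' ⊆ V → V' ∈ S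

/-- A double suit: a pair of suits whose intersection is `{∅}`. -/
def IsDoubleSuit {A : Type*} {N : ℕ} (X : TPair A N) : Prop :=
  IsSuit X.1 ∧ IsSuit X.2 ∧ X.1 ∩ X.2 = {∅}

/-- The pair `(𝒫(V), 𝒫(^N A \ V))`. -/
def perfPair {A : Type*} {N : ℕ} (V : Team A N) : TPair A N :=
  (Set.powerset V, Set.powerset Vᶜ)

/-- A pair is perfect if it equals `(𝒫(V), 𝒫(^N A \ V))` for some team `V`. -/
def IsPerfect {A : Type*} {N : ℕ} (X : TPair A N) : Prop :=
  ∃ V : Team A N, X = perfPair V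

/-- The constant `0 = ({∅}, 𝒫(^N A))`. -/
def zeroP (A : Type*) (N : ℕ) : TPair A N := ({∅}, Set.univ)

/-- The constant `1 = (𝒫(^N A), {∅})`. -/
def oneP (A : Type*) (N : ℕ) : TPair A N := (Set.univ, {∅})

/-- The diagonal element `D_ij`. -/
def diagP (A : Type*) {N : ℕ} (i j : Fin N) : TPair A N :=
  (Set.powerset {a : Fin N → A | a i = a j}, Set.powerset {a : Fin N → A | a i ≠ a j})

/-- Negation: `¬(X⁺, X⁻) = (X⁻, X⁺)`. -/
def negP {A : Type*} {N : ℕ} (X : TPair A N) : TPair A N := (X.2, X.1)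

/-- The operation `+_∅`. -/
def addE {A : Type*} {N : ℕ} (X Y : TPair A N) : TPair A N :=
  ({V | ∃ V₁ ∈ X.1, ∃ V₂ ∈ Y.1, Disjoint V₁ V₂ ∧ V₁ ∪ V₂ = V}, X.2 ∩ Y.2)

/-- The operation `·_∅`. -/
def mulE {A : Type*} {N : ℕ} (X Y : TPair A N) : TPair A N :=
  (X.1 ∩ Y.1, {W | ∃ W₁ ∈ X.2, ∃ W₂ ∈ Y.2, Disjoint W₁ W₂ ∧ W₁ ∪ W₂ = W})

/-- The `n`-variation of `V` by `f`: `V(n:f) = {a(n:f(a)) : a ∈ V}`. -/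
def varF {A : Type*} {N : ℕ} (V : Team A N) (n : Fin N) (f : (Fin N → A) → A) : Team A N :=
  (fun a => Function.update a n (f a)) '' V

/-- `V(n:A) = {a(n:b) : a ∈ V, b ∈ A}`. -/
def varAll {A : Type*} {N : ℕ} (V : Team A N) (n : Fin N) : Team A N :=
  {c | ∃ a ∈ V, ∃ b : A, c = Function.update a n b}

/-- The cylindrification `C_{n,∅}` (every `f : V → A` is independent of `∅`). -/
def cylE {A : Type*} {N : ℕ} (n : Fin N) (X : TPair A N) : TPair A N :=
  ({V | ∃ f : (Fin N → A) → A, varF V n f ∈ X.1}, {W | varAll W n ∈ X.2})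

/-- A double suit `X` is perfect iff `X +_∅ ¬X = 1`. -/
theorem perfect_iff_addE_neg_eq_one {A : Type*} {N : ℕ} (X : TPair A N)
    (hX : IsDoubleSuit X) :
    IsPerfect X ↔ addE X (negP X) = oneP A N := by

  obtain ⟨⟨_, hPd⟩, ⟨_, hNd⟩, hcap⟩ := hX
  constructor
  · rintro ⟨V, rfl⟩
    unfold addE negP oneP perfPair
    ext1
    · ext W
      simp only [Set.mem_setOf_eq, Set.mem_univ, iff_true]
      exact ⟨W ∩ V, fun a ha => ha.2, W ∩ Vᶜ, fun a ha => ha.2,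
        Set.disjoint_left.mpr (fun a ha hb => hb.2 ha.2),
        by rw [← Set.inter_union_distrib_left, Set.union_compl_self, Set.inter_univ]⟩
    · ext W
      simp only [Set.mem_inter_iff, perfPair, Set.mem_powerset_iff, Set.mem_singleton_iff]
      constructor
      · rintro ⟨h1, h2⟩
        exact Set.subset_empty_iff.mp (fun a ha => (h1 ha) (h2 ha))
      · rintro rfl; exact ⟨Set.empty_subset _, Set.empty_subset _⟩
  · intro h
    have hu : (Set.univ : Team A N) ∈ (addE X (negP X)).1 := by
      rw [h]; trivial
    obtain ⟨V₁, hV₁, V₂, hV₂, hdis, huni⟩ := hu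
    refine ⟨V₁, ?_⟩
    have hV₂c : V₂ = V₁ᶜ := by
      have hc : IsCompl V₁ V₂ :=
        ⟨hdis, codisjoint_iff.mpr huni⟩
      exact hc.compl_eq.symm
    have key : ∀ U ∈ X.1, U ⊆ V₁ := by
      intro U hU a haU
      by_contra hna
      have h1 : ({a} : Team A N) ∈ X.1 := hPd hU (Set.singleton_subset_iff.mpr haU)
      have h2 : ({a} : Team A N) ∈ X.2 := by
        apply hNd hV₂
        rw [hV₂c]
        exact Set.singleton_subset_iff.mpr hna
      have : ({a} : Team A N) ∈ ({∅} : Set (Team A N)) := hcap ▸ ⟨h1, h2⟩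
      exact (Set.singleton_ne_empty a) this
    have key2 : ∀ U ∈ X.2, U ⊆ V₁ᶜ := by
      intro U hU a haU
      intro haV₁
      have h2 : ({a} : Team A N) ∈ X.2 := hNd hU (Set.singleton_subset_iff.mpr haU)
      have h1 : ({a} : Team A N) ∈ X.1 := hPd hV₁ (Set.singleton_subset_iff.mpr haV₁)
      have : ({a} : Team A N) ∈ ({∅} : Set (Team A N)) := hcap ▸ ⟨h1, h2⟩
      exact (Set.singleton_ne_empty a) this
    unfold perfPair
    ext1
    · ext U
      exact ⟨fun hU => key U hU, fun hU => hPd hV₁ hU⟩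
    · ext U
      refine ⟨fun hU => key2 U hU, fun hU => hNd hV₂ ?_⟩
      rw [hV₂c]; exact hU
end

section
/- Let X be a double suit over base set A and dimension N. Then X is perfect if and only if X ·_∅ ¬X = 0. -/
/-- A double suit `X` is perfect iff `X ·_∅ ¬X = 0`. -/
theorem perfect_iff_mulE_neg_eq_zero {A : Type*} {N : ℕ} (X : TPair A N)
    (hX : IsDoubleSuit X) :
    IsPerfect X ↔ mulE X (negP X) = zeroP A N := by
  obtain ⟨⟨_, hclP⟩, ⟨_, hclM⟩, hinter⟩ := hX
  constructor
  · rintro ⟨V, rfl⟩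
    unfold mulE negP zeroP perfPair
    refine Prod.ext ?_ ?_
    · simpa [perfPair] using hinter
    · ext W
      simp only [Set.mem_setOf_eq, Set.mem_univ, iff_true]
      exact ⟨W ∩ Vᶜ, fun a ha => ha.2, W ∩ V, fun a ha => ha.2,
        Set.disjoint_left.mpr (fun a ha hb => ha.2 hb.2),
        by rw [← Set.inter_union_distrib_left]; simp⟩
  · intro h
    have h2 : (Set.univ : Team A N) ∈
        {W | ∃ W₁ ∈ X.2, ∃ W₂ ∈ (negP X).2, Disjoint W₁ W₂ ∧ W₁ ∪ W₂ = W} := by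
      rw [show {W | ∃ W₁ ∈ X.2, ∃ W₂ ∈ (negP X).2, Disjoint W₁ W₂ ∧ W₁ ∪ W₂ = W}
          = (mulE X (negP X)).2 from rfl, h]
      trivial
    obtain ⟨W₁, hW₁, W₂, hW₂, hdisj, huniv⟩ := h2
    refine ⟨W₂, ?_⟩
    have hcompl : W₁ = W₂ᶜ := by
      ext a
      constructor
      · intro ha hb
        exact Set.disjoint_left.mp hdisj ha hb
      · intro ha
        have : a ∈ W₁ ∪ W₂ := huniv ▸ Set.mem_univ a
        rcases this with h | h
        · exact h
        · exact absurd h ha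
    have hsingle : ∀ U, U ∈ X.1 → U ∈ X.2 → U = ∅ := by
      intro U h1 h2
      have : U ∈ X.1 ∩ X.2 := ⟨h1, h2⟩
      rw [hinter] at this
      exact this
    refine Prod.ext ?_ ?_
    · ext U
      simp only [perfPair, Set.mem_powerset_iff]
      constructor
      · intro hU
        intro a haU
        by_contra haV
        have haW1 : a ∈ W₁ := by
          rw [hcompl]; exact haV
        have h1 : {a} ∈ X.1 := hclP hU (Set.singleton_subset_iff.mpr haU)
        have h2 : {a} ∈ X.2 := hclM hW₁ (Set.singleton_subset_iff.mpr haW1)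
        have := hsingle _ h1 h2
        exact Set.singleton_ne_empty a this
      · intro hU
        exact hclP hW₂ hU
    · ext U
      simp only [perfPair, Set.mem_powerset_iff]
      constructor
      · intro hU
        intro a haU
        rw [← hcompl]
        by_contra haW1
        have haW2 : a ∈ W₂ := by
          have : a ∈ W₁ ∪ W₂ := huniv ▸ Set.mem_univ a
          rcases this with h | h
          · exact absurd h haW1
          · exact h
        have h1 : {a} ∈ X.1 := hclP hW₂ (Set.singleton_subset_iff.mpr haW2)
        have h2 : {a} ∈ X.2 := hclM hU (Set.singleton_subset_iff.mpr haU)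
        exact Set.singleton_ne_empty a (hsingle _ h1 h2)
      · intro hU
        rw [← hcompl] at hU
        exact hclM hW₁ hU
end

section
/- The collection of pairs of suits over base set A and dimension N contains the constants 0, 1, and D_ij for all i, j < N, and is closed under the operations ¬, +_J, ·_J, and C_{n,J} for all J ⊆ Fin N and n < N; that is, if X and Y are pairs of suits, then so are ¬X, X +_J Y, X ·_J Y, and C_{n,J}(X). -/
/-- A pair of suits. -/
def IsSuitPair {A : Type*} {N : ℕ} (X : TPair A N) : Prop :=
  IsSuit X.1 ∧ IsSuit X.2

/-- `a ≈_J b` : the valuations `a` and `b` agree outside of `J`. -/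
def AgreeOutside {A : Type*} {N : ℕ} (J : Set (Fin N)) (a b : Fin N → A) : Prop :=
  ∀ i ∉ J, a i = b i

/-- `V = V₁ ∪_J V₂` : `V₁, V₂` form a `J`-saturated disjoint cover of `V`. -/
def CovJ {A : Type*} {N : ℕ} (J : Set (Fin N)) (V V₁ V₂ : Team A N) : Prop :=
  Disjoint V₁ V₂ ∧ V₁ ∪ V₂ = V ∧
  (∀ a ∈ V₁, ∀ b ∈ V, AgreeOutside J a b → b ∈ V₁) ∧
  (∀ a ∈ V₂, ∀ b ∈ V, AgreeOutside J a b → b ∈ V₂)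

/-- `f` is independent of `J` on `V`. -/
def IndepOn {A : Type*} {N : ℕ} (J : Set (Fin N)) (V : Team A N)
    (f : (Fin N → A) → A) : Prop :=
  ∀ a ∈ V, ∀ b ∈ V, AgreeOutside J a b → f a = f b

/-- The operation `+_J`. -/
def addJ {A : Type*} {N : ℕ} (J : Set (Fin N)) (X Y : TPair A N) : TPair A N :=
  ({V | ∃ V₁ ∈ X.1, ∃ V₂ ∈ Y.1, CovJ J V V₁ V₂}, X.2 ∩ Y.2)

/-- The operation `·_J`. -/
def mulJ {A : Type*} {N : ℕ} (J : Set (Fin N)) (X Y : TPair A N) : TPair A N :=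
  (X.1 ∩ Y.1, {W | ∃ W₁ ∈ X.2, ∃ W₂ ∈ Y.2, CovJ J W W₁ W₂})

/-- The cylindrification `C_{n,J}`. -/
def cylJ {A : Type*} {N : ℕ} (n : Fin N) (J : Set (Fin N)) (X : TPair A N) : TPair A N :=
  ({V | ∃ f : (Fin N → A) → A, IndepOn J V f ∧ varF V n f ∈ X.1}, {W | varAll W n ∈ X.2})


lemma empty_mem_suit {A : Type*} {N : ℕ} {S : Set (Team A N)} (h : IsSuit S) :
    (∅ : Team A N) ∈ S := by
  obtain ⟨⟨V, hV⟩, hd⟩ := h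
  exact hd hV (Set.empty_subset V)

lemma isSuit_powerset {A : Type*} {N : ℕ} (T : Team A N) :
    IsSuit (Set.powerset T) := by
  refine ⟨⟨∅, Set.empty_subset T⟩, fun V V' hV hsub => hsub.trans hV⟩

lemma covJ_empty {A : Type*} {N : ℕ} (J : Set (Fin N)) :
    CovJ J (∅ : Team A N) ∅ ∅ := by
  refine ⟨disjoint_bot_left, by simp, ?_, ?_⟩ <;> intro a ha <;> exact absurd ha (Set.notMem_empty a)

lemma covJ_subset {A : Type*} {N : ℕ} {J : Set (Fin N)} {V V₁ V₂ V' : Team A N}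
    (h : CovJ J V V₁ V₂) (hsub : V' ⊆ V) : CovJ J V' (V' ∩ V₁) (V' ∩ V₂) := by
  obtain ⟨hdisj, hunion, hc1, hc2⟩ := h
  refine ⟨?_, ?_, ?_, ?_⟩
  · exact Disjoint.mono Set.inter_subset_right Set.inter_subset_right hdisj
  · rw [← Set.inter_union_distrib_left, hunion]
    exact Set.inter_eq_self_of_subset_left hsub
  · rintro a ⟨ha', ha1⟩ b hb hab
    exact ⟨hb, hc1 a ha1 b (hsub hb) hab⟩
  · rintro a ⟨ha', ha2⟩ b hb hab
    exact ⟨hb, hc2 a ha2 b (hsub hb) hab⟩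

lemma isSuit_cov {A : Type*} {N : ℕ} (J : Set (Fin N)) {S T : Set (Team A N)}
    (hS : IsSuit S) (hT : IsSuit T) :
    IsSuit {V | ∃ V₁ ∈ S, ∃ V₂ ∈ T, CovJ J V V₁ V₂} := by
  constructor
  · exact ⟨∅, ∅, empty_mem_suit hS, ∅, empty_mem_suit hT, covJ_empty J⟩
  · rintro V V' ⟨V₁, h1, V₂, h2, hcov⟩ hsub
    exact ⟨V' ∩ V₁, hS.2 h1 Set.inter_subset_right,
      V' ∩ V₂, hT.2 h2 Set.inter_subset_right, covJ_subset hcov hsub⟩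

/-- The pairs of suits contain `0`, `1`, `D_ij` and are closed under
`¬`, `+_J`, `·_J`, and `C_{n,J}`. -/
theorem suitPairs_closed (A : Type*) (N : ℕ) :
    IsSuitPair (zeroP A N) ∧
    IsSuitPair (oneP A N) ∧
    (∀ i j : Fin N, IsSuitPair (diagP A i j)) ∧
    (∀ X : TPair A N, IsSuitPair X → IsSuitPair (negP X)) ∧
    (∀ (J : Set (Fin N)) (X Y : TPair A N),
      IsSuitPair X → IsSuitPair Y → IsSuitPair (addJ J X Y)) ∧
    (∀ (J : Set (Fin N)) (X Y : TPair A N),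
      IsSuitPair X → IsSuitPair Y → IsSuitPair (mulJ J X Y)) ∧
    (∀ (n : Fin N) (J : Set (Fin N)) (X : TPair A N),
      IsSuitPair X → IsSuitPair (cylJ n J X)) := by
  refine ⟨⟨⟨⟨∅, rfl⟩, ?_⟩, ⟨⟨∅, trivial⟩, fun _ _ _ _ => trivial⟩⟩,
    ⟨⟨⟨∅, trivial⟩, fun _ _ _ _ => trivial⟩, ⟨⟨∅, rfl⟩, ?_⟩⟩,
    fun i j => ⟨isSuit_powerset _, isSuit_powerset _⟩,
    fun X hX => ⟨hX.2, hX.1⟩, ?_, ?_, ?_⟩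
  · intro V V' hV hsub
    simp only [zeroP, Set.mem_singleton_iff] at hV ⊢
    subst hV; exact Set.subset_empty_iff.mp hsub
  · intro V V' hV hsub
    simp only [oneP, Set.mem_singleton_iff] at hV ⊢
    subst hV; exact Set.subset_empty_iff.mp hsub
  · intro J X Y hX hY
    exact ⟨isSuit_cov J hX.1 hY.1,
      ⟨⟨∅, empty_mem_suit hX.2, empty_mem_suit hY.2⟩,
        fun V V' hV hsub => ⟨hX.2.2 hV.1 hsub, hY.2.2 hV.2 hsub⟩⟩⟩
  · intro J X Y hX hY
    exact ⟨⟨⟨∅, empty_mem_suit hX.1, empty_mem_suit hY.1⟩,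
        fun V V' hV hsub => ⟨hX.1.2 hV.1 hsub, hY.1.2 hV.2 hsub⟩⟩,
      isSuit_cov J hX.2 hY.2⟩
  · intro n J X hX
    constructor
    · constructor
      · refine ⟨∅, fun a => a n, fun a ha => absurd ha (Set.notMem_empty a), ?_⟩
        have : varF (∅ : Team A N) n (fun a => a n) = ∅ := by
          simp [varF]
        rw [this]; exact empty_mem_suit hX.1
      · rintro V V' ⟨f, hindep, hmem⟩ hsub
        refine ⟨f, fun a ha b hb hab => hindep a (hsub ha) b (hsub hb) hab, ?_⟩
        exact hX.1.2 hmem (Set.image_mono hsub)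
    · constructor
      · refine ⟨∅, ?_⟩
        have : varAll (∅ : Team A N) n = ∅ := by
          ext c; simp [varAll]
        show varAll (∅ : Team A N) n ∈ X.2
        rw [this]; exact empty_mem_suit hX.2
      · intro V V' hV hsub
        refine hX.2.2 hV ?_
        rintro c ⟨a, ha, b, rfl⟩
        exact ⟨a, hsub ha, b, rfl⟩
end

section
/- Let S be a set of perfect double suits over base set A and dimension N, and let T be the smallest collection of pairs of collections of teams that contains S together with the constants 0, 1, and D_ij (i, j < N) and is closed under ¬, +_∅, ·_∅, and C_{n,∅} for all n < N. Then every element of T is a perfect double suit. -/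
/-- The smallest collection of pairs containing `S` together with the constants
`0`, `1`, `D_ij`, and closed under `¬`, `+_∅`, `·_∅`, and `C_{n,∅}`. -/
inductive GenE {A : Type*} {N : ℕ} (S : Set (TPair A N)) : TPair A N → Prop
  | base {X : TPair A N} : X ∈ S → GenE S X
  | zero : GenE S (zeroP A N)
  | one : GenE S (oneP A N)
  | diag (i j : Fin N) : GenE S (diagP A i j)
  | neg {X : TPair A N} : GenE S X → GenE S (negP X)
  | add {X Y : TPair A N} : GenE S X → GenE S Y → GenE S (addE X Y)
  | mul {X Y : TPair A N} : GenE S X → GenE S Y → GenE S (mulE X Y)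
  | cyl (n : Fin N) {X : TPair A N} : GenE S X → GenE S (cylE n X)

lemma perfPair_isDoubleSuit {A : Type*} {N : ℕ} (V : Team A N) :
    IsDoubleSuit (perfPair V) := by
  refine ⟨⟨⟨∅, by simp [perfPair]⟩, ?_⟩, ⟨⟨∅, by simp [perfPair]⟩, ?_⟩, ?_⟩
  · intro U U' hU hU'
    exact hU'.trans hU
  · intro U U' hU hU'
    exact hU'.trans hU
  · ext U
    simp only [perfPair, Set.mem_inter_iff, Set.mem_powerset_iff, Set.mem_singleton_iff]
    constructor
    · rintro ⟨h1, h2⟩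
      have : U ⊆ V ∩ Vᶜ := Set.subset_inter h1 h2
      simpa using this
    · rintro rfl; simp

lemma zeroP_eq_perf (A : Type*) (N : ℕ) : zeroP A N = perfPair (∅ : Team A N) := by
  simp [zeroP, perfPair, Set.powerset]

lemma oneP_eq_perf (A : Type*) (N : ℕ) : oneP A N = perfPair (Set.univ : Team A N) := by
  simp [oneP, perfPair, Set.powerset]

lemma diagP_eq_perf (A : Type*) {N : ℕ} (i j : Fin N) :
    diagP A i j = perfPair {a : Fin N → A | a i = a j} := by
  rfl

lemma negP_perf {A : Type*} {N : ℕ} (V : Team A N) :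
    negP (perfPair V) = perfPair Vᶜ := by
  simp [negP, perfPair]

lemma addE_perf {A : Type*} {N : ℕ} (V W : Team A N) :
    addE (perfPair V) (perfPair W) = perfPair (V ∪ W) := by
  unfold addE perfPair
  refine Prod.ext ?_ ?_
  · ext U
    simp only [Set.mem_setOf_eq, Set.mem_powerset_iff]
    constructor
    · rintro ⟨V₁, h1, V₂, h2, -, rfl⟩
      exact Set.union_subset_union h1 h2
    · intro hU
      refine ⟨U ∩ V, Set.inter_subset_right, U \ V, ?_, ?_, Set.inter_union_diff U V⟩
      · intro a ha
        rcases hU ha.1 with h | h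
        · exact absurd h ha.2
        · exact h
      · exact Set.disjoint_left.mpr fun a ha hb => hb.2 ha.2
  · ext U
    simp only [Set.mem_inter_iff, Set.mem_powerset_iff, Set.compl_union,
      Set.subset_inter_iff]

lemma mulE_eq_neg {A : Type*} {N : ℕ} (X Y : TPair A N) :
    mulE X Y = negP (addE (negP X) (negP Y)) := rfl

lemma mulE_perf {A : Type*} {N : ℕ} (V W : Team A N) :
    mulE (perfPair V) (perfPair W) = perfPair (Vᶜ ∪ Wᶜ)ᶜ := by
  rw [mulE_eq_neg, negP_perf, negP_perf, addE_perf, negP_perf]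

lemma cylE_perf {A : Type*} {N : ℕ} (n : Fin N) (V : Team A N) :
    cylE n (perfPair V) =
      perfPair {a : Fin N → A | ∃ b : A, Function.update a n b ∈ V} := by
  unfold cylE perfPair
  refine Prod.ext ?_ ?_
  · ext U
    simp only [Set.mem_setOf_eq, Set.mem_powerset_iff, varF, Set.image_subset_iff]
    constructor
    · rintro ⟨f, hf⟩ a ha
      exact ⟨f a, hf ha⟩
    · intro h
      classical
      refine ⟨fun a => if h' : ∃ b : A, Function.update a n b ∈ V then h'.choose else a n,
        fun a ha => ?_⟩
      have h' : ∃ b : A, Function.update a n b ∈ V := h ha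
      simp only [Set.mem_preimage]
      rw [dif_pos h']
      exact h'.choose_spec
  · ext U
    simp only [Set.mem_setOf_eq, Set.mem_powerset_iff]
    constructor
    · intro h a ha
      simp only [Set.mem_compl_iff, Set.mem_setOf_eq]
      rintro ⟨b, hb⟩
      exact h (⟨a, ha, b, rfl⟩ : _ ∈ varAll U n) hb
    · rintro h c ⟨a, ha, b, rfl⟩ hc
      exact h ha ⟨b, hc⟩

/-- Every element generated from a set of perfect double suits by the
`∅`-operations is a perfect double suit. -/
theorem genE_perfect {A : Type*} {N : ℕ} (S : Set (TPair A N))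
    (hS : ∀ X ∈ S, IsDoubleSuit X ∧ IsPerfect X) :
    ∀ X : TPair A N, GenE S X → IsDoubleSuit X ∧ IsPerfect X := by
  have key : ∀ X : TPair A N, GenE S X → IsPerfect X := by
    intro X hX
    induction hX with
    | base h => exact (hS _ h).2
    | zero => exact ⟨∅, zeroP_eq_perf A N⟩
    | one => exact ⟨Set.univ, oneP_eq_perf A N⟩
    | diag i j => exact ⟨_, diagP_eq_perf A i j⟩
    | neg _ ih => obtain ⟨V, rfl⟩ := ih; exact ⟨Vᶜ, negP_perf V⟩
    | add _ _ ihX ihY =>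
        obtain ⟨V, rfl⟩ := ihX; obtain ⟨W, rfl⟩ := ihY
        exact ⟨V ∪ W, addE_perf V W⟩
    | mul _ _ ihX ihY =>
        obtain ⟨V, rfl⟩ := ihX; obtain ⟨W, rfl⟩ := ihY
        exact ⟨(Vᶜ ∪ Wᶜ)ᶜ, mulE_perf V W⟩
    | cyl n _ ih =>
        obtain ⟨V, rfl⟩ := ih
        exact ⟨_, cylE_perf n V⟩
  intro X hX
  obtain ⟨V, rfl⟩ := key X hX
  exact ⟨perfPair_isDoubleSuit V, V, rfl⟩
end

section
/- The map F defined on teams by F(V) = (𝒫(V), 𝒫(^N A \ V)) is a bijection from 𝒫(^N A) onto the set of perfect double suits over A and N, and it satisfies: F(∅) = 0; F(^N A) = 1; F({a ∈ ^N A : a_i = a_j}) = D_ij for all i, j < N; F(^N A \ V) = ¬F(V); F(V ∪ W) = F(V) +_∅ F(W); F(V ∩ W) = F(V) ·_∅ F(W); and F(V(n:A)) = C_{n,∅}(F(V)) for all n < N. (Hence the N-dimensional cylindric set algebra over A is isomorphic to the algebra of perfect double suits under the ∅-operations.) -/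
/-- The map `F(V) = (𝒫(V), 𝒫(^N A \ V))` is a bijection from the teams onto
the perfect double suits, and it is an isomorphism of cylindric-algebra
operations: it sends `∅` to `0`, `^N A` to `1`, diagonal sets to `D_ij`,
complement to `¬`, union to `+_∅`, intersection to `·_∅`, and the
cylindrification `V ↦ V(n:A)` to `C_{n,∅}`. -/
theorem perfPair_bijective_iso (A : Type*) (N : ℕ) :
    Set.BijOn (perfPair : Team A N → TPair A N) Set.univ
      {X : TPair A N | IsDoubleSuit X ∧ IsPerfect X} ∧
    perfPair (∅ : Team A N) = zeroP A N ∧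
    perfPair (Set.univ : Team A N) = oneP A N ∧
    (∀ i j : Fin N, perfPair {a : Fin N → A | a i = a j} = diagP A i j) ∧
    (∀ V : Team A N, perfPair Vᶜ = negP (perfPair V)) ∧
    (∀ V W : Team A N, perfPair (V ∪ W) = addE (perfPair V) (perfPair W)) ∧
    (∀ V W : Team A N, perfPair (V ∩ W) = mulE (perfPair V) (perfPair W)) ∧
    (∀ (V : Team A N) (n : Fin N), perfPair (varAll V n) = cylE n (perfPair V)) := by
  have hsuit : ∀ V : Team A N, IsSuit (Set.powerset V) := fun V =>
    ⟨⟨∅, Set.empty_subset V⟩, fun U U' hU hU' => hU'.trans hU⟩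
  have hds : ∀ V : Team A N, IsDoubleSuit (perfPair V) := by
    intro V
    refine ⟨hsuit V, hsuit Vᶜ, ?_⟩
    ext U
    simp only [perfPair, Set.mem_inter_iff, Set.mem_powerset_iff, Set.mem_singleton_iff]
    constructor
    · rintro ⟨h1, h2⟩
      rw [Set.eq_empty_iff_forall_notMem]
      intro a ha
      exact h2 ha (h1 ha)
    · rintro rfl
      exact ⟨Set.empty_subset _, Set.empty_subset _⟩
  refine ⟨⟨fun V _ => ⟨hds V, V, rfl⟩, fun V _ W _ h => ?_, fun X hX => ?_⟩,
    ?_, ?_, ?_, fun V => by simp [perfPair, negP, compl_compl], fun V W => ?_, fun V W => ?_, fun V n => ?_⟩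
  · -- injectivity
    have h1 : V ∈ (perfPair W).1 := h ▸ (Set.mem_powerset_iff V V).2 le_rfl
    have h2 : W ∈ (perfPair V).1 := h ▸ (Set.mem_powerset_iff W W).2 le_rfl
    exact le_antisymm h1 h2
  · rcases hX.2 with ⟨V, rfl⟩
    exact ⟨V, Set.mem_univ V, rfl⟩
  · -- zero
    simp only [perfPair, zeroP, Prod.mk.injEq]
    constructor
    · ext U; simp [Set.subset_empty_iff]
    · ext U; simp
  · -- one
    simp only [perfPair, oneP, Prod.mk.injEq]
    constructor
    · ext U; simp
    · ext U; simp [Set.subset_empty_iff, Set.subset_compl_iff_disjoint_left]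
  · -- diag
    intro i j
    simp only [perfPair, diagP, Prod.mk.injEq]
    exact ⟨trivial, rfl⟩
  · -- union
    simp only [perfPair, addE, Prod.mk.injEq]
    constructor
    · ext U
      simp only [Set.mem_powerset_iff, Set.mem_setOf_eq]
      constructor
      · intro hU
        refine ⟨U ∩ V, Set.inter_subset_right, U \ V, ?_, ?_, ?_⟩
        · intro a ha
          rcases hU ha.1 with h | h
          · exact absurd h ha.2
          · exact h
        · exact Set.disjoint_sdiff_right.mono_left Set.inter_subset_right
        · rw [Set.inter_union_diff]
      · rintro ⟨V₁, h1, V₂, h2, _, rfl⟩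
        exact Set.union_subset_union h1 h2
    · ext U
      simp only [Set.mem_powerset_iff, Set.mem_inter_iff, Set.compl_union,
        Set.subset_inter_iff]
  · -- inter
    simp only [perfPair, mulE, Prod.mk.injEq]
    constructor
    · ext U
      simp only [Set.mem_powerset_iff, Set.mem_inter_iff, Set.subset_inter_iff]
    · ext U
      simp only [Set.mem_powerset_iff, Set.mem_setOf_eq, Set.compl_inter]
      constructor
      · intro hU
        refine ⟨U ∩ Vᶜ, Set.inter_subset_right, U \ Vᶜ, ?_, ?_, ?_⟩
        · intro a ha
          rcases hU ha.1 with h | h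
          · exact absurd h ha.2
          · exact h
        · exact Set.disjoint_sdiff_right.mono_left Set.inter_subset_right
        · rw [Set.inter_union_diff]
      · rintro ⟨V₁, h1, V₂, h2, _, rfl⟩
        exact Set.union_subset_union h1 h2
  · -- cylindrification
    simp only [perfPair, cylE, Prod.mk.injEq]
    constructor
    · ext U
      simp only [Set.mem_powerset_iff, Set.mem_setOf_eq]
      constructor
      · intro hU
        classical
        refine ⟨fun a => if h : a ∈ varAll V n then h.choose n else a n, ?_⟩
        rintro _ ⟨a, ha, rfl⟩
        have h : a ∈ varAll V n := hU ha
        obtain ⟨hc, b, hb⟩ := h.choose_spec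
        simp only [h, dif_pos]
        have key : Function.update a n (h.choose n) = h.choose := by
          ext k
          by_cases hk : k = n
          · subst hk; simp
          · rw [Function.update_of_ne hk]
            have h2 := congrFun hb k
            rw [Function.update_of_ne hk] at h2
            exact h2
        rw [key]
        exact hc
      · rintro ⟨f, hf⟩ a ha
        refine ⟨Function.update a n (f a), hf ⟨a, ha, rfl⟩, a n, ?_⟩
        ext k
        by_cases hk : k = n <;> simp [Function.update, hk]
    · ext U
      simp only [Set.mem_powerset_iff, Set.mem_setOf_eq]
      constructor
      · intro hU c hc hcV
        rcases hc with ⟨a, haU, b, rfl⟩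
        refine hU haU ⟨Function.update a n b, hcV, a n, ?_⟩
        ext k
        by_cases hk : k = n <;> simp [Function.update, hk]
      · intro hU a haU ⟨c, hcV, b, hab⟩
        have key : Function.update a n (c n) = c := by
          ext k
          by_cases hk : k = n
          · subst hk; simp
          · rw [Function.update_of_ne hk]
            have h2 := congrFun hab k
            rw [Function.update_of_ne hk] at h2
            exact h2
        exact hU ⟨a, haU, c n, rfl⟩ (by rw [key]; exact hcV)
end

section
/- For every IFG_N-formula φ over σ and every σ-structure 𝔄 with universe A, the meaning ‖φ‖_𝔄 = ({V : 𝔄 ⊨⁺ φ[V]}, {W : 𝔄 ⊨⁻ φ[W]}) is a double suit: both coordinates are nonempty and closed under subsets (in particular 𝔄 ⊨⁺ φ[∅] and 𝔄 ⊨⁻ φ[∅], and 𝔄 ⊨± φ[V] together with V' ⊆ V implies 𝔄 ⊨± φ[V']), and the only team that is simultaneously a trump and a cotrump of φ is ∅. -/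
open FirstOrder

/-- IFG_N-formulas over the signature `L`: atomic first-order formulas
(equalities and relations between terms in the variables `v_0, …, v_{N-1}`),
closed under `∼ψ`, `ψ₁ ∨_J ψ₂`, and `∃v_n/J ψ`. -/
inductive IFG (L : Language) (N : ℕ) : Type _
  | equal (t₁ t₂ : L.Term (Fin N)) : IFG L N
  | rel {k : ℕ} (R : L.Relations k) (ts : Fin k → L.Term (Fin N)) : IFG L N
  | not (φ : IFG L N) : IFG L N
  | or (J : Set (Fin N)) (φ₁ φ₂ : IFG L N) : IFG L N
  | ex (n : Fin N) (J : Set (Fin N)) (φ : IFG L N) : IFG L N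

/-- Hodges' trump semantics: `Sat A φ true V` means `𝔄 ⊨⁺ φ[V]` (`V` is a trump),
and `Sat A φ false W` means `𝔄 ⊨⁻ φ[W]` (`W` is a cotrump). -/
def Sat {L : Language} {N : ℕ} (A : Type*) [L.Structure A] :
    IFG L N → Bool → Team A N → Prop
  | .equal t₁ t₂, true, V => ∀ a ∈ V, t₁.realize a = t₂.realize a
  | .equal t₁ t₂, false, W => ∀ a ∈ W, t₁.realize a ≠ t₂.realize a
  | .rel R ts, true, V => ∀ a ∈ V, Language.Structure.RelMap R (fun i => (ts i).realize a)
  | .rel R ts, false, W => ∀ a ∈ W, ¬ Language.Structure.RelMap R (fun i => (ts i).realize a)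
  | .not φ, b, V => Sat A φ (!b) V
  | .or J φ₁ φ₂, true, V =>
      ∃ V₁ V₂, CovJ J V V₁ V₂ ∧ Sat A φ₁ true V₁ ∧ Sat A φ₂ true V₂
  | .or _ φ₁ φ₂, false, W => Sat A φ₁ false W ∧ Sat A φ₂ false W
  | .ex n J φ, true, V =>
      ∃ f : (Fin N → A) → A, IndepOn J V f ∧ Sat A φ true (varF V n f)
  | .ex n _ φ, false, W => Sat A φ false (varAll W n)

/-- The meaning `‖φ‖_𝔄 = ({V : 𝔄 ⊨⁺ φ[V]}, {W : 𝔄 ⊨⁻ φ[W]})`. -/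
def meaning {L : Language} {N : ℕ} (A : Type*) [L.Structure A] (φ : IFG L N) :
    TPair A N :=
  ({V | Sat A φ true V}, {W | Sat A φ false W})

/-- An IFG-formula is perfect if all of its slash sets are empty. -/
def IFG.Perfect {L : Language} {N : ℕ} : IFG L N → Prop
  | .equal _ _ => True
  | .rel _ _ => True
  | .not φ => φ.Perfect
  | .or J φ₁ φ₂ => J = ∅ ∧ φ₁.Perfect ∧ φ₂.Perfect
  | .ex _ J φ => J = ∅ ∧ φ.Perfect

/-- The perfection `φ_∅` of `φ`: replace every slash set by `∅`. -/
def IFG.perfection {L : Language} {N : ℕ} : IFG L N → IFG L N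
  | .equal t₁ t₂ => .equal t₁ t₂
  | .rel R ts => .rel R ts
  | .not φ => .not φ.perfection
  | .or _ φ₁ φ₂ => .or ∅ φ₁.perfection φ₂.perfection
  | .ex n _ φ => .ex n ∅ φ.perfection

lemma sat_empty {L : Language} {N : ℕ} (A : Type*) [L.Structure A]
    (φ : IFG L N) (b : Bool) : Sat A φ b ∅ := by
  induction φ generalizing b with
  | equal t₁ t₂ => cases b <;> exact fun a ha => ha.elim
  | rel R ts => cases b <;> exact fun a ha => ha.elim
  | not φ ih => exact ih _
  | or J φ₁ φ₂ ih₁ ih₂ =>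
    cases b with
    | false => exact ⟨ih₁ false, ih₂ false⟩
    | true =>
      refine ⟨∅, ∅, ⟨by simp, by simp, ?_, ?_⟩, ih₁ true, ih₂ true⟩ <;>
        exact fun a ha => ha.elim
  | ex n J φ ih =>
    cases b with
    | false =>
      have : varAll (∅ : Team A N) n = ∅ := by
        ext c; simp [varAll]
      rw [show Sat A (.ex n J φ) false ∅ = Sat A φ false (varAll ∅ n) from rfl, this]
      exact ih false
    | true =>
      refine ⟨fun a => a n, fun a ha => ha.elim, ?_⟩
      have : varF (∅ : Team A N) n (fun a => a n) = ∅ := by simp [varF]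
      rw [this]; exact ih true

lemma sat_mono {L : Language} {N : ℕ} (A : Type*) [L.Structure A]
    (φ : IFG L N) (b : Bool) {V V' : Team A N} (hV : Sat A φ b V) (hsub : V' ⊆ V) :
    Sat A φ b V' := by
  induction φ generalizing b V V' with
  | equal t₁ t₂ => cases b <;> exact fun a ha => hV a (hsub ha)
  | rel R ts => cases b <;> exact fun a ha => hV a (hsub ha)
  | not φ ih => exact ih _ hV hsub
  | or J φ₁ φ₂ ih₁ ih₂ =>
    cases b with
    | false => exact ⟨ih₁ false hV.1 hsub, ih₂ false hV.2 hsub⟩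
    | true =>
      obtain ⟨V₁, V₂, ⟨hdisj, hunion, hsat₁, hsat₂⟩, h₁, h₂⟩ := hV
      refine ⟨V₁ ∩ V', V₂ ∩ V', ⟨?_, ?_, ?_, ?_⟩,
        ih₁ true h₁ Set.inter_subset_left, ih₂ true h₂ Set.inter_subset_left⟩
      · exact hdisj.mono Set.inter_subset_left Set.inter_subset_left
      · rw [← Set.union_inter_distrib_right, hunion, Set.inter_eq_right.mpr hsub]
      · rintro a ⟨ha1, ha'⟩ c hc hag
        exact ⟨hsat₁ a ha1 c (hunion ▸ hsub hc) hag, hc⟩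
      · rintro a ⟨ha2, ha'⟩ c hc hag
        exact ⟨hsat₂ a ha2 c (hunion ▸ hsub hc) hag, hc⟩
  | ex n J φ ih =>
    cases b with
    | false =>
      refine ih false hV ?_
      rintro c ⟨a, ha, d, rfl⟩
      exact ⟨a, hsub ha, d, rfl⟩
    | true =>
      obtain ⟨f, hf, hsat⟩ := hV
      refine ⟨f, fun a ha c hc hag => hf a (hsub ha) c (hsub hc) hag,
        ih true hsat (Set.image_mono hsub)⟩

lemma sat_both {L : Language} {N : ℕ} (A : Type*) [L.Structure A]
    (φ : IFG L N) {V : Team A N} (ht : Sat A φ true V) (hf : Sat A φ false V) :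
    V = ∅ := by
  induction φ generalizing V with
  | equal t₁ t₂ =>
    ext a; simp only [Set.mem_empty_iff_false, iff_false]
    exact fun ha => hf a ha (ht a ha)
  | rel R ts =>
    ext a; simp only [Set.mem_empty_iff_false, iff_false]
    exact fun ha => hf a ha (ht a ha)
  | not φ ih => exact ih hf ht
  | or J φ₁ φ₂ ih₁ ih₂ =>
    obtain ⟨V₁, V₂, ⟨hdisj, hunion, _, _⟩, h₁, h₂⟩ := ht
    have hs₁ : V₁ ⊆ V := hunion ▸ Set.subset_union_left
    have hs₂ : V₂ ⊆ V := hunion ▸ Set.subset_union_right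
    have e₁ := ih₁ h₁ (sat_mono A φ₁ false hf.1 hs₁)
    have e₂ := ih₂ h₂ (sat_mono A φ₂ false hf.2 hs₂)
    rw [← hunion, e₁, e₂, Set.union_empty]
  | ex n J φ ih =>
    obtain ⟨f, hf', hsat⟩ := ht
    have hsub : varF V n f ⊆ varAll V n := by
      rintro c ⟨a, ha, rfl⟩
      exact ⟨a, ha, f a, rfl⟩
    have := ih hsat (sat_mono A φ false hf hsub)
    by_contra h
    obtain ⟨a, ha⟩ := Set.nonempty_iff_ne_empty.mpr h
    exact absurd this (Set.nonempty_iff_ne_empty.mp ⟨_, ⟨a, ha, rfl⟩⟩)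

/-- The meaning of any IFG-formula is a double suit: the collections of trumps
and of cotrumps are both nonempty and closed under subsets (in particular
`𝔄 ⊨⁺ φ[∅]`, `𝔄 ⊨⁻ φ[∅]`, and `𝔄 ⊨± φ[V]` with `V' ⊆ V` implies
`𝔄 ⊨± φ[V']`), and the only team that is both a trump and a cotrump is `∅`. -/
theorem meaning_isDoubleSuit {L : Language} {N : ℕ} (A : Type*) [L.Structure A]
    (φ : IFG L N) : IsDoubleSuit (meaning A φ) := by
  refine ⟨⟨⟨∅, sat_empty A φ true⟩, fun V V' hV hsub => sat_mono A φ true hV hsub⟩,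
    ⟨⟨∅, sat_empty A φ false⟩, fun V V' hV hsub => sat_mono A φ false hV hsub⟩, ?_⟩
  ext V
  constructor
  · rintro ⟨ht, hf⟩
    exact sat_both A φ ht hf
  · rintro rfl
    exact ⟨sat_empty A φ true, sat_empty A φ false⟩
end

section
/- Let φ be a perfect IFG_N-formula over σ (every slash set occurring in φ is ∅) and 𝔄 a σ-structure with universe A. Then for every team V ⊆ ^N A, 𝔄 ⊨⁺ φ[V] if and only if 𝔄 ⊨⁺ φ[{a}] for every a ∈ V (perfect formulas are flat). -/
open FirstOrder

/-- Pointwise (Tarski-style) semantics for IFG formulas. -/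
def PSat {L : Language} {N : ℕ} (A : Type*) [L.Structure A] :
    IFG L N → Bool → (Fin N → A) → Prop
  | .equal t₁ t₂, true, a => t₁.realize a = t₂.realize a
  | .equal t₁ t₂, false, a => t₁.realize a ≠ t₂.realize a
  | .rel R ts, true, a => Language.Structure.RelMap R (fun i => (ts i).realize a)
  | .rel R ts, false, a => ¬ Language.Structure.RelMap R (fun i => (ts i).realize a)
  | .not φ, b, a => PSat A φ (!b) a
  | .or _ φ₁ φ₂, true, a => PSat A φ₁ true a ∨ PSat A φ₂ true a
  | .or _ φ₁ φ₂, false, a => PSat A φ₁ false a ∧ PSat A φ₂ false a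
  | .ex n _ φ, true, a => ∃ b : A, PSat A φ true (Function.update a n b)
  | .ex n _ φ, false, a => ∀ b : A, PSat A φ false (Function.update a n b)

lemma agreeOutside_empty {A : Type*} {N : ℕ} {a b : Fin N → A}
    (h : AgreeOutside (∅ : Set (Fin N)) a b) : a = b :=
  funext fun i => h i (Set.notMem_empty i)

lemma sat_iff_psat {L : Language} {N : ℕ} (A : Type*) [L.Structure A]
    (φ : IFG L N) (hφ : φ.Perfect) :
    ∀ (b : Bool) (V : Team A N), Sat A φ b V ↔ ∀ a ∈ V, PSat A φ b a := by
  induction φ with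
  | equal t₁ t₂ => intro b V; cases b <;> exact Iff.rfl
  | rel R ts => intro b V; cases b <;> exact Iff.rfl
  | not φ ih => intro b V; exact ih hφ (!b) V
  | or J φ₁ φ₂ ih₁ ih₂ =>
    obtain ⟨hJ, h₁, h₂⟩ := hφ
    subst hJ
    intro b V
    cases b with
    | false =>
      simp only [Sat, PSat, ih₁ h₁, ih₂ h₂]
      constructor
      · rintro ⟨p, q⟩ a ha; exact ⟨p a ha, q a ha⟩
      · intro h; exact ⟨fun a ha => (h a ha).1, fun a ha => (h a ha).2⟩
    | true =>
      simp only [Sat, PSat, ih₁ h₁, ih₂ h₂]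
      constructor
      · rintro ⟨V₁, V₂, ⟨_, hcov, _, _⟩, p₁, p₂⟩ a ha
        rw [← hcov] at ha
        rcases ha with ha | ha
        · exact Or.inl (p₁ a ha)
        · exact Or.inr (p₂ a ha)
      · intro h
        refine ⟨{a ∈ V | PSat A φ₁ true a}, {a ∈ V | ¬ PSat A φ₁ true a ∧ PSat A φ₂ true a},
          ⟨?_, ?_, ?_, ?_⟩, ?_, ?_⟩
        · rw [Set.disjoint_left]; rintro a ⟨_, ha⟩ ⟨_, hna, _⟩; exact hna ha
        · ext a
          constructor
          · rintro (⟨h, _⟩ | ⟨h, _⟩) <;> exact h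
          · intro ha
            by_cases hp : PSat A φ₁ true a
            · exact Or.inl ⟨ha, hp⟩
            · rcases h a ha with hp' | hp'
              · exact absurd hp' hp
              · exact Or.inr ⟨ha, hp, hp'⟩
        · intro a ha b hb hab
          rw [← agreeOutside_empty hab]
          exact ha
        · intro a ha b hb hab
          rw [← agreeOutside_empty hab]
          exact ha
        · intro a ha; exact ha.2
        · intro a ha; exact ha.2.2
  | ex n J φ ih =>
    obtain ⟨hJ, h₁⟩ := hφ
    subst hJ
    intro b V
    cases b with
    | false =>
      simp only [Sat, PSat, ih h₁]
      constructor
      · intro h a ha c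
        exact h _ ⟨a, ha, c, rfl⟩
      · rintro h x ⟨a, ha, c, rfl⟩
        exact h a ha c
    | true =>
      simp only [Sat, PSat, ih h₁]
      constructor
      · rintro ⟨f, _, hf⟩ a ha
        exact ⟨f a, hf _ ⟨a, ha, rfl⟩⟩
      · intro h
        by_cases hA : Nonempty A
        · classical
          refine ⟨fun a => if hc : ∃ c : A, PSat A φ true (Function.update a n c)
              then hc.choose else Classical.arbitrary A, ?_, ?_⟩
          · intro a _ c _ hac
            rw [agreeOutside_empty hac]
          · rintro x ⟨a, ha, rfl⟩
            have hc : ∃ c : A, PSat A φ true (Function.update a n c) := h a ha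
            simp only [hc, dif_pos]
            exact hc.choose_spec
        · refine ⟨fun a => (hA ⟨a n⟩).elim, ?_, ?_⟩
          · intro a ha; exact (hA ⟨a n⟩).elim
          · rintro x ⟨a, ha, rfl⟩; exact (hA ⟨a n⟩).elim

/-- Perfect IFG-formulas are flat: `𝔄 ⊨⁺ φ[V]` iff `𝔄 ⊨⁺ φ[{a}]` for all `a ∈ V`. -/
theorem perfect_flat_pos {L : Language} {N : ℕ} (A : Type*) [L.Structure A]
    (φ : IFG L N) (hφ : φ.Perfect) (V : Team A N) :
    Sat A φ true V ↔ ∀ a ∈ V, Sat A φ true {a} := by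
  rw [sat_iff_psat A φ hφ]
  constructor
  · intro h a ha
    rw [sat_iff_psat A φ hφ]
    intro b hb
    rw [Set.mem_singleton_iff] at hb
    subst hb
    exact h _ ha
  · intro h a ha
    have := h a ha
    rw [sat_iff_psat A φ hφ] at this
    exact this a rfl
end

section
/- Let φ be any IFG_N-formula over σ, 𝔄 a σ-structure with universe A, and V ⊆ ^N A a team. If 𝔄 ⊨⁺ φ[V] then 𝔄 ⊨⁺ φ_∅[V], and if 𝔄 ⊨⁻ φ[V] then 𝔄 ⊨⁻ φ_∅[V], where φ_∅ is the perfection of φ (perfection preserves winning strategies). -/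
open FirstOrder

/-- Perfection preserves winning strategies: `𝔄 ⊨± φ[V]` implies `𝔄 ⊨± φ_∅[V]`. -/
theorem perfection_preserves_strategies {L : Language} {N : ℕ} (A : Type*)
    [L.Structure A] (φ : IFG L N) (V : Team A N) :
    (Sat A φ true V → Sat A φ.perfection true V) ∧
    (Sat A φ false V → Sat A φ.perfection false V) := by
  induction φ generalizing V with
  | equal t₁ t₂ => exact ⟨id, id⟩
  | rel R ts => exact ⟨id, id⟩
  | not ψ ih => exact ⟨(ih V).2, (ih V).1⟩
  | or J φ₁ φ₂ ih₁ ih₂ =>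
    constructor
    · rintro ⟨V₁, V₂, ⟨hd, hu, _, _⟩, h₁, h₂⟩
      refine ⟨V₁, V₂, ⟨hd, hu, ?_, ?_⟩, (ih₁ V₁).1 h₁, (ih₂ V₂).1 h₂⟩ <;>
      · intro a ha b _ hab
        have : a = b := funext fun i => hab i (Set.notMem_empty i)
        exact this ▸ ha
    · rintro ⟨h₁, h₂⟩
      exact ⟨(ih₁ V).2 h₁, (ih₂ V).2 h₂⟩
  | ex n J ψ ih =>
    constructor
    · rintro ⟨f, _, hs⟩
      refine ⟨f, ?_, (ih _).1 hs⟩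
      intro a _ b _ hab
      have : a = b := funext fun i => hab i (Set.notMem_empty i)
      rw [this]
    · exact fun h => (ih _).2 h
end

section
/- Let φ be any IFG_N-formula over σ and 𝔄 a σ-structure with universe A. Then ‖φ‖_𝔄 is a perfect double suit (i.e., ‖φ‖_𝔄 = (𝒫(V), 𝒫(^N A \ V)) for some team V) if and only if there exists a perfect IFG_N-formula ψ (one all of whose slash sets are ∅) such that ‖φ‖_𝔄 = ‖ψ‖_𝔄; that is, φ has the same meaning in 𝔄 as an ordinary first-order formula if and only if ‖φ‖_𝔄 is perfect. -/
open FirstOrder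

/-- Ordinary Tarski satisfaction of a single valuation (ignoring slash sets). -/
def sat1 {L : Language} {N : ℕ} (A : Type*) [L.Structure A] :
    IFG L N → (Fin N → A) → Prop
  | .equal t₁ t₂, a => t₁.realize a = t₂.realize a
  | .rel R ts, a => Language.Structure.RelMap R (fun i => (ts i).realize a)
  | .not φ, a => ¬ sat1 A φ a
  | .or _ φ₁ φ₂, a => sat1 A φ₁ a ∨ sat1 A φ₂ a
  | .ex n _ φ, a => ∃ b, sat1 A φ (Function.update a n b)

lemma IFG.perfection_perfect {L : Language} {N : ℕ} :
    ∀ φ : IFG L N, φ.perfection.Perfect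
  | .equal _ _ => trivial
  | .rel _ _ => trivial
  | .not φ => φ.perfection_perfect
  | .or _ φ₁ φ₂ => ⟨rfl, φ₁.perfection_perfect, φ₂.perfection_perfect⟩
  | .ex _ _ φ => ⟨rfl, φ.perfection_perfect⟩

lemma sat_perfection {L : Language} {N : ℕ} (A : Type*) [L.Structure A] :
    ∀ (φ : IFG L N) (b : Bool) (V : Team A N),
      Sat A φ b V → Sat A φ.perfection b V := by
  intro φ
  induction φ with
  | equal t₁ t₂ => intro b V h; exact h
  | rel R ts => intro b V h; exact h
  | not φ ih => intro b V h; exact ih (!b) V h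
  | or J φ₁ φ₂ ih₁ ih₂ =>
    intro b V h
    cases b with
    | false => exact ⟨ih₁ false V h.1, ih₂ false V h.2⟩
    | true =>
      obtain ⟨V₁, V₂, ⟨hd, hu, _, _⟩, h₁, h₂⟩ := h
      exact ⟨V₁, V₂,
        ⟨hd, hu, fun a ha b _ hab => agreeOutside_empty hab ▸ ha,
          fun a ha b _ hab => agreeOutside_empty hab ▸ ha⟩,
        ih₁ true V₁ h₁, ih₂ true V₂ h₂⟩
  | ex n J φ ih =>
    intro b V h
    cases b with
    | false => exact ih false _ h
    | true =>
      obtain ⟨f, _, hf⟩ := h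
      exact ⟨f, fun a _ b _ hab => by rw [agreeOutside_empty hab], ih true _ hf⟩

lemma flat {L : Language} {N : ℕ} (A : Type*) [L.Structure A] :
    ∀ (ψ : IFG L N), ψ.Perfect → ∀ V : Team A N,
      (Sat A ψ true V ↔ ∀ a ∈ V, sat1 A ψ a) ∧
      (Sat A ψ false V ↔ ∀ a ∈ V, ¬ sat1 A ψ a) := by
  intro ψ
  induction ψ with
  | equal t₁ t₂ => intro _ V; exact ⟨Iff.rfl, Iff.rfl⟩
  | rel R ts => intro _ V; exact ⟨Iff.rfl, Iff.rfl⟩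
  | not φ ih =>
    intro hp V
    refine ⟨(ih hp V).2, ?_⟩
    have := (ih hp V).1
    constructor
    · intro h a ha hna; exact hna (this.mp h a ha)
    · intro h; exact this.mpr fun a ha => not_not.mp (h a ha)
  | or J φ₁ φ₂ ih₁ ih₂ =>
    intro hp V
    obtain ⟨hJ, hp₁, hp₂⟩ := hp
    subst hJ
    constructor
    · constructor
      · rintro ⟨V₁, V₂, ⟨hd, hu, _, _⟩, h₁, h₂⟩ a ha
        rw [← hu] at ha
        rcases ha with ha | ha
        · exact Or.inl (((ih₁ hp₁ V₁).1.mp h₁) a ha)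
        · exact Or.inr (((ih₂ hp₂ V₂).1.mp h₂) a ha)
      · intro h
        refine ⟨{a ∈ V | sat1 A φ₁ a}, {a ∈ V | ¬ sat1 A φ₁ a}, ?_, ?_, ?_⟩
        · refine ⟨?_, ?_, ?_, ?_⟩
          · rw [Set.disjoint_left]; rintro a ⟨_, h1⟩ ⟨_, h2⟩; exact h2 h1
          · ext a
            simp only [Set.mem_union, Set.mem_setOf_eq]
            constructor
            · rintro (⟨ha, _⟩ | ⟨ha, _⟩) <;> exact ha
            · intro ha; by_cases h1 : sat1 A φ₁ a
              · exact Or.inl ⟨ha, h1⟩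
              · exact Or.inr ⟨ha, h1⟩
          · intro a ha b hb hab; rw [← agreeOutside_empty hab]; exact ha
          · intro a ha b hb hab; rw [← agreeOutside_empty hab]; exact ha
        · exact (ih₁ hp₁ _).1.mpr fun a ha => ha.2
        · exact (ih₂ hp₂ _).1.mpr fun a ha => (h a ha.1).resolve_left ha.2
    · constructor
      · rintro ⟨h₁, h₂⟩ a ha h
        rcases h with h | h
        · exact ((ih₁ hp₁ V).2.mp h₁) a ha h
        · exact ((ih₂ hp₂ V).2.mp h₂) a ha h
      · intro h
        exact ⟨(ih₁ hp₁ V).2.mpr fun a ha h1 => h a ha (Or.inl h1),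
          (ih₂ hp₂ V).2.mpr fun a ha h2 => h a ha (Or.inr h2)⟩
  | ex n J φ ih =>
    intro hp V
    obtain ⟨hJ, hpφ⟩ := hp
    subst hJ
    constructor
    · constructor
      · rintro ⟨f, _, hf⟩ a ha
        refine ⟨f a, ((ih hpφ _).1.mp hf) _ ?_⟩
        exact ⟨a, ha, rfl⟩
      · intro h
        classical
        refine ⟨fun a => if hx : ∃ b, sat1 A φ (Function.update a n b)
            then hx.choose else a n,
          fun a _ b _ hab => by rw [agreeOutside_empty hab], ?_⟩
        refine (ih hpφ _).1.mpr ?_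
        rintro c ⟨a, ha, rfl⟩
        have hx : ∃ b, sat1 A φ (Function.update a n b) := h a ha
        simp only [hx, dif_pos]
        exact hx.choose_spec
    · constructor
      · intro h a ha ⟨b, hb⟩
        exact ((ih hpφ _).2.mp h) (Function.update a n b) ⟨a, ha, b, rfl⟩ hb
      · intro h
        refine (ih hpφ _).2.mpr ?_
        rintro c ⟨a, ha, b, rfl⟩ hc
        exact h a ha ⟨b, hc⟩

lemma meaning_perfect {L : Language} {N : ℕ} (A : Type*) [L.Structure A]
    (ψ : IFG L N) (hp : ψ.Perfect) :
    meaning A ψ = perfPair {a | sat1 A ψ a} := by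
  unfold meaning perfPair
  refine Prod.ext ?_ ?_
  · ext V
    simp only [Set.mem_setOf_eq, Set.mem_powerset_iff]
    rw [(flat A ψ hp V).1]
    exact ⟨fun h a ha => h a ha, fun h a ha => h ha⟩
  · ext V
    simp only [Set.mem_setOf_eq, Set.mem_powerset_iff]
    rw [(flat A ψ hp V).2]
    exact ⟨fun h a ha => h a ha, fun h a ha => h ha⟩

/-- `‖φ‖_𝔄` is a perfect double suit iff `φ` has the same meaning in `𝔄` as
some perfect IFG-formula (i.e., an ordinary first-order formula). -/
theorem perfect_meaning_iff_firstOrder {L : Language} {N : ℕ} (A : Type*)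
    [L.Structure A] (φ : IFG L N) :
    (∃ V : Team A N, meaning A φ = perfPair V) ↔
    (∃ ψ : IFG L N, ψ.Perfect ∧ meaning A φ = meaning A ψ) := by
  constructor
  · rintro ⟨V, h⟩
    refine ⟨φ.perfection, φ.perfection_perfect, ?_⟩
    have hm := meaning_perfect A φ.perfection φ.perfection_perfect
    set V' : Team A N := {a | sat1 A φ.perfection a} with hV'
    have htrump : {W : Team A N | Sat A φ true W} = Set.powerset V :=
      congrArg Prod.fst h
    have hcotrump : {W : Team A N | Sat A φ false W} = Set.powerset Vᶜ :=
      congrArg Prod.snd h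
    have hVV' : V = V' := by
      ext a
      constructor
      · intro ha
        have : ({a} : Team A N) ∈ Set.powerset V := Set.singleton_subset_iff.mpr ha
        rw [← htrump] at this
        have := sat_perfection A φ true {a} this
        exact ((flat A φ.perfection φ.perfection_perfect {a}).1.mp this) a rfl
      · intro ha
        by_contra hna
        have : ({a} : Team A N) ∈ Set.powerset Vᶜ := Set.singleton_subset_iff.mpr hna
        rw [← hcotrump] at this
        have := sat_perfection A φ false {a} this
        exact ((flat A φ.perfection φ.perfection_perfect {a}).2.mp this) a rfl ha
    rw [h, hVV', hm]
  · rintro ⟨ψ, hp, h⟩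
    exact ⟨{a | sat1 A ψ a}, h.trans (meaning_perfect A ψ hp)⟩
end
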